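/- Let (X, d) be a metric space with basepoint e and η : [0,∞) → [0,∞) a homeomorphism. Suppose (f_k) is a sequence of η-quasisymmetric self-maps of X with f_k(e) = e, and there is p ≠ e, p' ≠ e with f_k(p) → p'. Then for all 0 < r < R the family (f_k) is uniformly equicontinuous on the annulus A_{r,R}: there is an increasing homeomorphism ω from [0, 2R] onto an interval [0, S] such that d(f_k(q₁), f_k(q₂)) ≤ ω(d(q₁, q₂)) for all q₁, q₂ ∈ A_{r,R} and all k. -/
import Mathlib


/-- `f` is `η`-quasisymmetric: `d(f q₁, f p) / d(f q₂, f p) ≤ η (d(q₁,p)/d(q₂,p))`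
for all `p, q₁, q₂` with `q₂ ≠ p` (stated in multiplied-out form). -/
def IsQS {X : Type*} [MetricSpace X] (η : ℝ → ℝ) (f : X → X) : Prop :=
  ∀ p q₁ q₂ : X, q₂ ≠ p →
    dist (f q₁) (f p) ≤ η (dist q₁ p / dist q₂ p) * dist (f q₂) (f p)

/-- `η` is an (increasing) homeomorphism of `[0,∞)` onto itself. -/
def IsHomeoOfIci (η : ℝ → ℝ) : Prop :=
  η 0 = 0 ∧ StrictMonoOn η (Set.Ici (0 : ℝ)) ∧ ContinuousOn η (Set.Ici (0 : ℝ)) ∧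
    Set.BijOn η (Set.Ici (0 : ℝ)) (Set.Ici (0 : ℝ))

/-- If `(f_k)` is a sequence of `η`-quasisymmetric self-maps of a metric
space `X` fixing the basepoint `e`, and `f_k p → p'` for some `p ≠ e`, `p' ≠ e`, then for
all `0 < r < R` the family `(f_k)` is uniformly equicontinuous on the annulus `A_{r,R}`:
there is an increasing homeomorphism `ω : [0, 2R] → [0, S]` such that
`d(f_k q₁, f_k q₂) ≤ ω (d(q₁, q₂))` for all `q₁, q₂ ∈ A_{r,R}` and all `k`. -/
theorem stmt4 {X : Type*} [MetricSpace X] (e : X) (η : ℝ → ℝ)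
    (hη : IsHomeoOfIci η)
    (f : ℕ → X → X) (hf : ∀ k, IsQS η (f k)) (hfe : ∀ k, f k e = e)
    (p p' : X) (hp : p ≠ e) (hp' : p' ≠ e)
    (hconv : Filter.Tendsto (fun k => f k p) Filter.atTop (nhds p')) :
    ∀ r R : ℝ, 0 < r → r < R → ∃ S : ℝ, 0 < S ∧ ∃ ω : ℝ → ℝ,
      ω 0 = 0 ∧ StrictMonoOn ω (Set.Icc 0 (2 * R)) ∧
      ContinuousOn ω (Set.Icc 0 (2 * R)) ∧
      Set.BijOn ω (Set.Icc 0 (2 * R)) (Set.Icc 0 S) ∧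
      ∀ k, ∀ q₁ q₂ : X,
        r ≤ dist q₁ e → dist q₁ e ≤ R → r ≤ dist q₂ e → dist q₂ e ≤ R →
        dist (f k q₁) (f k q₂) ≤ ω (dist q₁ q₂) := by
  obtain ⟨η0, ηmono, ηcont, ηbij⟩ := hη
  have ηnonneg : ∀ x : ℝ, 0 ≤ x → 0 ≤ η x := fun x hx => ηbij.mapsTo hx
  have ηpos : ∀ x : ℝ, 0 < x → 0 < η x := by
    intro x hx
    have := ηmono (Set.self_mem_Ici) (le_of_lt hx : (0:ℝ) ≤ x) hx
    linarith [η0]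
  -- boundedness of dist (f k p) e
  have hg : Filter.Tendsto (fun k => dist (f k p) e) Filter.atTop (nhds (dist p' e)) :=
    hconv.dist tendsto_const_nhds
  obtain ⟨M₀, hM₀⟩ := hg.bddAbove_range
  set M : ℝ := max M₀ 1 with hMdef
  have hMpos : (0:ℝ) < M := lt_of_lt_of_le one_pos (le_max_right _ _)
  have hM : ∀ k, dist (f k p) e ≤ M := fun k =>
    le_trans (hM₀ ⟨k, rfl⟩) (le_max_left _ _)
  have dpe : 0 < dist p e := dist_pos.mpr hp
  intro r R hr hrR
  have hR : 0 < R := hr.trans hrR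
  set C : ℝ := η (R / dist p e) * M with hCdef
  have hCpos : 0 < C := mul_pos (ηpos _ (div_pos hR dpe)) hMpos
  set a : ℝ := 2 * R / r with hadef
  have hapos : 0 < a := div_pos (by linarith) hr
  refine ⟨C * η a, mul_pos hCpos (ηpos _ hapos), fun t => C * η (t / r), ?_, ?_, ?_, ?_, ?_⟩
  · simp [η0]
  · intro x hx y hy hxy
    have h1 : x / r ∈ Set.Ici (0:ℝ) := div_nonneg hx.1 hr.le
    have h2 : y / r ∈ Set.Ici (0:ℝ) := div_nonneg hy.1 hr.le
    exact mul_lt_mul_of_pos_left (ηmono h1 h2 (by exact div_lt_div_of_pos_right hxy hr)) hCpos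
  · exact (continuous_const.continuousOn).mul
      ((ηcont.comp ((continuous_id.div_const r).continuousOn)
        (fun x hx => div_nonneg (Set.mem_Icc.mp hx).1 hr.le)))
  · constructor
    · intro x hx
      have hx0 : (0:ℝ) ≤ x / r := div_nonneg hx.1 hr.le
      have hxa : x / r ≤ a := (div_le_div_iff_of_pos_right hr).mpr hx.2
      constructor
      · exact mul_nonneg hCpos.le (ηnonneg _ hx0)
      · have : η (x / r) ≤ η a := by
          rcases hxa.eq_or_lt with h | h
          · rw [h]
          · exact (ηmono hx0 hapos.le h).le
        exact mul_le_mul_of_nonneg_left this hCpos.le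
    constructor
    · intro x hx y hy hxy
      have h1 : x / r ∈ Set.Ici (0:ℝ) := div_nonneg hx.1 hr.le
      have h2 : y / r ∈ Set.Ici (0:ℝ) := div_nonneg hy.1 hr.le
      by_contra hne
      rcases lt_or_gt_of_ne hne with h | h
      · have := ηmono h1 h2 (div_lt_div_of_pos_right h hr)
        have := mul_lt_mul_of_pos_left this hCpos
        exact absurd hxy (ne_of_lt this)
      · have := ηmono h2 h1 (div_lt_div_of_pos_right h hr)
        have := mul_lt_mul_of_pos_left this hCpos
        exact absurd hxy.symm (ne_of_lt this)
    · intro y hy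
      have hy' : y / C ∈ Set.Icc (η 0) (η a) := by
        rw [η0]
        exact ⟨div_nonneg hy.1 hCpos.le, (div_le_iff₀ hCpos).mpr (by linarith [hy.2])⟩
      have hcont' : ContinuousOn η (Set.Icc 0 a) :=
        ηcont.mono (Set.Icc_subset_Ici_self)
      obtain ⟨x, hx, hηx⟩ := intermediate_value_Icc hapos.le hcont' hy'
      refine ⟨x * r, ⟨mul_nonneg hx.1 hr.le, ?_⟩, ?_⟩
      · have := mul_le_mul_of_nonneg_right hx.2 hr.le
        calc x * r ≤ a * r := this
          _ = 2 * R := div_mul_cancel₀ _ hr.ne'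
      · show C * η (x * r / r) = y
        rw [mul_div_assoc, div_self hr.ne', mul_one, hηx, mul_div_cancel₀ _ hCpos.ne']
  · intro k q₁ q₂ hq₁r hq₁R hq₂r hq₂R
    have hq₂e : (e : X) ≠ q₂ := by
      intro h
      rw [← h] at hq₂r
      simp at hq₂r
      linarith
    have h1 := hf k q₂ q₁ e hq₂e
    have h2 := hf k e q₂ p (fun h => hp (by simpa using h))
    rw [hfe] at h1 h2
    have deq₂ : dist e q₂ = dist q₂ e := dist_comm _ _
    have hd12 : 0 ≤ dist q₁ q₂ := dist_nonneg
    have hA : η (dist q₁ q₂ / dist e q₂) ≤ η (dist q₁ q₂ / r) := by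
      rcases eq_or_lt_of_le hq₂r with h | h
      · rw [deq₂, ← h]
      · rcases eq_or_lt_of_le hd12 with h0 | h0
        · rw [← h0]; simp
        · refine (ηmono (Set.mem_Ici.mpr (div_nonneg hd12 ?_))
            (Set.mem_Ici.mpr (div_nonneg hd12 hr.le))
            (div_lt_div_of_pos_left h0 hr (deq₂ ▸ h))).le
          rw [deq₂]; linarith
    have hB : dist e (f k q₂) ≤ C := by
      rw [dist_comm]
      calc dist (f k q₂) e ≤ η (dist q₂ e / dist p e) * dist (f k p) e := h2
        _ ≤ η (R / dist p e) * M := by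
            apply mul_le_mul _ (hM k) dist_nonneg (ηnonneg _ (div_nonneg hR.le dpe.le))
            rcases eq_or_lt_of_le hq₂R with h | h
            · rw [h]
            · exact (ηmono (Set.mem_Ici.mpr (div_nonneg (by linarith) dpe.le))
                (Set.mem_Ici.mpr (div_nonneg hR.le dpe.le))
                (div_lt_div_of_pos_right h dpe)).le
        _ = C := rfl
    calc dist (f k q₁) (f k q₂) ≤ η (dist q₁ q₂ / dist e q₂) * dist e (f k q₂) := h1
      _ ≤ η (dist q₁ q₂ / r) * C := by
          apply mul_le_mul hA hB dist_nonneg (ηnonneg _ (div_nonneg hd12 hr.le))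
      _ = C * η (dist q₁ q₂ / r) := mul_comm _ _
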